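/- Assume G(m) is Buchsbaum and let i be an index with a_i > b_i. Then l_i < a_i − b_i, where l_i = max{ l ∈ ℕ : t^{ω_i + l g_1}* ∈ (0 :_{G(m)} 𝓜^r) }. -/

import Mathlib

/-!
Common setup: the numerical semigroup ring `R = k[[t^S]]`, its maximal ideal `m`,
the associated graded ring `G(m)` (realized as the Rees algebra `R[mt]` modulo
the extension of `m`, the standard presentation of `⊕_{h≥0} m^h/m^{h+1}`),
the homogeneous maximal ideal `𝓜`, the reduction number `r`, initial forms
`t^s*`, Apery sets, the invariants `a_i`, `b_i`, `l_i`, the order function,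
the partial order `≤_M`, symmetry, `M`-purity, Buchsbaumness and
Cohen-Macaulayness (via their characterizations `(0:𝓜) = (0:𝓜^r)` and
`(0:𝓜^r) = 0` valid in this one-dimensional graded setting).
-/

set_option maxHeartbeats 1000000
set_option synthInstance.maxHeartbeats 1000000

open scoped Pointwise
open Polynomial

noncomputable section

namespace NumSgrp

/-- The numerical semigroup `S` generated by `g 0 < g 1 < ⋯ < g n`. -/
def S {n : ℕ} (g : Fin (n + 1) → ℕ) : AddSubmonoid ℕ := AddSubmonoid.closure (Set.range g)

/-- `setM g h` is the `h`-fold sumset `M + ⋯ + M` of the maximal ideal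
`M = S \ {0}`; by convention `setM g 0 = S` (corresponding to `m^0 = R`). -/
def setM {n : ℕ} (g : Fin (n + 1) → ℕ) : ℕ → Set ℕ
  | 0 => (S g : Set ℕ)
  | h+1 => ({u : ℕ | u ∈ S g ∧ u ≠ 0} + setM g h : Set ℕ)

/-- `ordS g s` = ord(s) = max { h | s ∈ hM }. -/
def ordS {n : ℕ} (g : Fin (n + 1) → ℕ) (s : ℕ) : ℕ := sSup {h | s ∈ setM g h}

/-- `ap g i` = ω_i, the least element of `S` congruent to `i` modulo `g 0`. -/
def ap {n : ℕ} (g : Fin (n + 1) → ℕ) (i : ℕ) : ℕ := sInf {s | s ∈ S g ∧ s % g 0 = i}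

/-- The Apery set `Ap_{g_1}(S) = {ω_0, …, ω_{g_1-1}}`. -/
def apSet {n : ℕ} (g : Fin (n + 1) → ℕ) : Set ℕ := {s | ∃ i < g 0, s = ap g i}

/-- The blow-up `S' = ⟨g_1, g_2 - g_1, …, g_n - g_1⟩`. -/
def S' {n : ℕ} (g : Fin (n + 1) → ℕ) : AddSubmonoid ℕ :=
  AddSubmonoid.closure (insert (g 0) (Set.range fun i => g i - g 0))

/-- `ap' g i` = ω'_i, the least element of `S'` congruent to `i` modulo `g 0`. -/
def ap' {n : ℕ} (g : Fin (n + 1) → ℕ) (i : ℕ) : ℕ := sInf {s | s ∈ S' g ∧ s % g 0 = i}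

/-- The Apery set `Ap_{g_1}(S') = {ω'_0, …, ω'_{g_1-1}}`. -/
def apSet' {n : ℕ} (g : Fin (n + 1) → ℕ) : Set ℕ := {s | ∃ i < g 0, s = ap' g i}

/-- `aa g i` = a_i, the unique integer with ω_i = ω'_i + a_i g_1. -/
def aa {n : ℕ} (g : Fin (n + 1) → ℕ) (i : ℕ) : ℕ := (ap g i - ap' g i) / g 0

/-- `bb g i` = b_i = ord(ω_i). -/
def bb {n : ℕ} (g : Fin (n + 1) → ℕ) (i : ℕ) : ℕ := ordS g (ap g i)

/-- The partial order `u ≤_M u'`: there is `s ∈ S` with `u + s = u'` and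
`ord u + ord s = ord u'`. -/
def leM {n : ℕ} (g : Fin (n + 1) → ℕ) (u v : ℕ) : Prop :=
  ∃ s ∈ S g, u + s = v ∧ ordS g u + ordS g s = ordS g v

/-- `maxAp_M(S)`: the maximal elements of the Apery set w.r.t. `≤_M`. -/
def maxAp {n : ℕ} (g : Fin (n + 1) → ℕ) : Set ℕ :=
  {u | u ∈ apSet g ∧ ∀ v ∈ apSet g, leM g u v → v = u}

/-- `S` is `M`-pure: all elements of `maxAp_M(S)` have the same order. -/
def MPure {n : ℕ} (g : Fin (n + 1) → ℕ) : Prop :=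
  ∀ u ∈ maxAp g, ∀ v ∈ maxAp g, ordS g u = ordS g v

/-- `S` viewed inside `ℤ`. -/
def SZ {n : ℕ} (g : Fin (n + 1) → ℕ) : Set ℤ := {x | ∃ s ∈ S g, (s : ℤ) = x}

/-- The Frobenius number `g(S) = max (ℤ \ S)`. -/
def frob {n : ℕ} (g : Fin (n + 1) → ℕ) : ℤ := sSup {x : ℤ | x ∉ SZ g}

/-- `S` is symmetric: for every `x ∈ ℤ`, `x ∉ S` implies `g(S) - x ∈ S`. -/
def IsSymm {n : ℕ} (g : Fin (n + 1) → ℕ) : Prop :=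
  ∀ x : ℤ, x ∉ SZ g → frob g - x ∈ SZ g

/-- Hypotheses: `g 0 < g 1 < ⋯ < g n` is a minimal system of generators with
gcd 1, so `S` is a numerical semigroup minimally generated by the `g i`. -/
structure MinGen {n : ℕ} (g : Fin (n + 1) → ℕ) : Prop where
  smono : StrictMono g
  minimal : ∀ i, g i ∉ AddSubmonoid.closure (Set.range g \ {g i})
  gcdeq : Finset.univ.gcd g = 1

variable (k : Type*) [Field k] {n : ℕ} (g : Fin (n + 1) → ℕ)

/-- `R = k[[t^S]]`: the subalgebra of `k[[t]]` of power series supported in `S`. -/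
def Rsub : Subalgebra k (PowerSeries k) where
  carrier := {f | ∀ i, PowerSeries.coeff i f ≠ 0 → i ∈ S g}
  zero_mem' := by intro i hi; simp at hi
  one_mem' := by
    intro i hi
    by_cases h : i = 0
    · exact h ▸ (S g).zero_mem
    · rw [PowerSeries.coeff_one, if_neg h] at hi; exact absurd rfl hi
  add_mem' := by
    intro a b ha hb i hi
    rw [map_add] at hi
    by_cases h : PowerSeries.coeff i a ≠ 0
    · exact ha i h
    · push_neg at h
      rw [h, zero_add] at hi
      exact hb i hi
  mul_mem' := by
    intro a b ha hb i hi
    rw [PowerSeries.coeff_mul] at hi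
    obtain ⟨p, hp, hne⟩ := Finset.exists_ne_zero_of_sum_ne_zero hi
    have h1 := ha p.1 (left_ne_zero_of_mul hne)
    have h2 := hb p.2 (right_ne_zero_of_mul hne)
    exact (Finset.HasAntidiagonal.mem_antidiagonal.mp hp) ▸ add_mem h1 h2
  algebraMap_mem' := by
    intro r i hi
    by_cases h : i = 0
    · exact h ▸ (S g).zero_mem
    · exfalso
      apply hi
      have : (algebraMap k (PowerSeries k)) r = PowerSeries.C r := rfl
      rw [this, PowerSeries.coeff_C, if_neg h]

open Classical in
/-- `t^s` as an element of `R` (defined to be `0` if `s ∉ S`). -/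
def tR (s : ℕ) : Rsub k g :=
  if h : s ∈ S g then
    ⟨PowerSeries.monomial s 1, by
      intro i hi
      rw [PowerSeries.coeff_monomial] at hi
      split at hi
      · next heq => exact heq ▸ h
      · exact absurd rfl hi⟩
  else 0

/-- `m = (t^{g_1}, …, t^{g_n})`, the maximal ideal of `R`. -/
def mI : Ideal (Rsub k g) := Ideal.span (Set.range fun i => tR k g (g i))

lemma tR_mul {s u : ℕ} (hs : s ∈ S g) (hu : u ∈ S g) :
    tR k g (s + u) = tR k g s * tR k g u := by
  simp only [tR, dif_pos hs, dif_pos hu, dif_pos (add_mem hs hu)]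
  apply Subtype.ext
  simp only [MulMemClass.coe_mul]
  show (PowerSeries.monomial (s + u)) (1 : k) =
    (PowerSeries.monomial s) 1 * (PowerSeries.monomial u) 1
  rw [← PowerSeries.X_pow_eq, ← PowerSeries.X_pow_eq, ← PowerSeries.X_pow_eq, pow_add]

lemma setM_subset : ∀ h : ℕ, setM g h ⊆ (S g : Set ℕ) := by
  intro h
  induction h with
  | zero => exact fun s hs => hs
  | succ h ih =>
    rintro s ⟨u, hu, v, hv, huv⟩
    have : u + v = s := huv
    exact this ▸ add_mem hu.1 (ih hv)

lemma le_of_mem_setM : ∀ h : ℕ, ∀ s ∈ setM g h, h ≤ s := by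
  intro h
  induction h with
  | zero => exact fun s _ => Nat.zero_le s
  | succ h ih =>
    rintro s ⟨u, hu, v, hv, huv⟩
    have hsum : u + v = s := huv
    have h1 : 1 ≤ u := Nat.one_le_iff_ne_zero.mpr hu.2
    have h2 := ih v hv
    omega

lemma tR_mem_mI {u : ℕ} (hu : u ∈ S g) (hne : u ≠ 0) : tR k g u ∈ mI k g := by
  have key : ∀ (x : ℕ) (_ : x ∈ S g), x = 0 ∨ tR k g x ∈ mI k g := by
    intro x hx
    induction hx using AddSubmonoid.closure_induction with
    | mem y hy =>
      obtain ⟨i, rfl⟩ := hy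
      exact Or.inr (Ideal.subset_span ⟨i, rfl⟩)
    | zero => exact Or.inl rfl
    | add x y hx hy px py =>
      rcases px with rfl | px
      · rcases py with rfl | py
        · exact Or.inl rfl
        · exact Or.inr (by rwa [zero_add])
      · refine Or.inr ?_
        rw [tR_mul k g hx hy]
        exact Ideal.mul_mem_right _ _ px
  rcases key u hu with rfl | h
  · exact absurd rfl hne
  · exact h

lemma tR_mem_pow_of_setM : ∀ h : ℕ, ∀ s ∈ setM g h, tR k g s ∈ (mI k g) ^ h := by
  intro h
  induction h with
  | zero =>
    intro s _
    rw [pow_zero, Ideal.one_eq_top]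
    exact Submodule.mem_top
  | succ h ih =>
    rintro s ⟨u, hu, v, hv, huv⟩
    have hsum : u + v = s := huv
    rw [← hsum, tR_mul k g hu.1 (setM_subset g h hv), pow_succ, mul_comm (tR k g u)]
    exact Ideal.mul_mem_mul (ih v hv) (tR_mem_mI k g hu.1 hu.2)

lemma mem_setM_ordS {s : ℕ} (hs : s ∈ S g) : s ∈ setM g (ordS g s) := by
  have : ordS g s ∈ {h | s ∈ setM g h} :=
    Nat.sSup_mem (⟨0, hs⟩ : Set.Nonempty {h | s ∈ setM g h})
      ⟨s, fun h hh => le_of_mem_setM g h s hh⟩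
  exact this

lemma tR_mem_pow (s : ℕ) : tR k g s ∈ (mI k g) ^ (ordS g s) := by
  by_cases hs : s ∈ S g
  · exact tR_mem_pow_of_setM k g _ s (mem_setM_ordS g hs)
  · rw [tR, dif_neg hs]
    exact zero_mem _

/-- `G(m) = ⊕_{h ≥ 0} m^h/m^{h+1}`, realized as the Rees algebra `R[mt]`
modulo the extension of `m` (the standard presentation of the associated
graded ring of a local ring). -/
abbrev grG : Type _ :=
  (reesAlgebra (mI k g)) ⧸
    (Ideal.map (algebraMap (Rsub k g) (reesAlgebra (mI k g))) (mI k g))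

/-- The homogeneous maximal ideal `𝓜 = m/m² ⊕ m²/m³ ⊕ ⋯` of `G(m)`: the image
of the ideal of elements of the Rees algebra whose degree-0 coefficient lies
in `m`. -/
def MM : Ideal (grG k g) :=
  Ideal.map (Ideal.Quotient.mk _)
    (Ideal.comap ((Polynomial.evalRingHom (0 : Rsub k g)).comp
      (reesAlgebra (mI k g)).val.toRingHom) (mI k g))

/-- The reduction number `r` of `m`: the least `r` with `m^{r+1} = t^{g_1}·m^r`. -/
def rnum : ℕ :=
  sInf {j | (mI k g) ^ (j + 1) = Ideal.span {tR k g (g 0)} * (mI k g) ^ j}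

/-- The initial form `t^s*` of `t^s` in `G(m)`, i.e. the image of `t^s` in
`m^{ord(s)}/m^{ord(s)+1}` (the degree-`ord(s)` component of `G(m)`). -/
def tstar (s : ℕ) : grG k g :=
  Ideal.Quotient.mk _
    ⟨(Polynomial.monomial (ordS g s)) (tR k g s),
      reesAlgebra.monomial_mem.mpr (tR_mem_pow k g s)⟩

/-- `(0 :_{G(m)} 𝓜^r) = H⁰_𝓜(G(m))`. -/
def annM : Ideal (grG k g) := Submodule.colon ⊥ ((MM k g ^ rnum k g : Ideal (grG k g)) : Set (grG k g))

/-- `(0 :_{G(m)} 𝓜)`. -/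
def ann1 : Ideal (grG k g) := Submodule.colon ⊥ (MM k g : Set (grG k g))

/-- `G(m)` is Buchsbaum iff `(0 :_{G(m)} 𝓜) = (0 :_{G(m)} 𝓜^r)`. -/
def IsBuchsbaum : Prop := ann1 k g = annM k g

/-- `G(m)` is Cohen-Macaulay iff `(0 :_{G(m)} 𝓜^r) = 0`. -/
def IsCM : Prop := annM k g = ⊥

/-- `l_i = max { l | t^{ω_i + l g_1}* ∈ (0 :_{G(m)} 𝓜^r) }`. -/
def lℓ (i : ℕ) : ℕ := sSup {l | tstar k g (ap g i + l * g 0) ∈ annM k g}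

/-- The length of a `G(m)`-module: the Krull dimension of its lattice of
submodules, i.e. the longest length of a chain of submodules. -/
def lenOf (M : Type*) [AddCommGroup M] [Module (grG k g) M] : WithBot ℕ∞ :=
  Order.krullDim (Submodule (grG k g) M)

/-- The socle `(0 :_{G/ξG} 𝓜) = ((ξ) :_G 𝓜)/(ξ)` of `G(m)/ξ·G(m)`, where
`ξ = t^{g_1}*` is the canonical degree-one homogeneous parameter of `G(m)`. -/
abbrev socQ : Type _ :=
  ↥(Submodule.colon (Ideal.span {tstar k g (g 0)}) (MM k g)) ⧸
    (Submodule.comap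
      (Submodule.colon (Ideal.span {tstar k g (g 0)}) (MM k g)).subtype
      (Ideal.span {tstar k g (g 0)}))

/-- `G(m)` is Gorenstein: Cohen-Macaulay of type 1, i.e. Cohen-Macaulay and
the socle of `G(m)` modulo the homogeneous parameter `ξ = t^{g_1}*` has
length 1 as a `G(m)`-module. -/
def IsGor : Prop := IsCM k g ∧ lenOf k g (socQ k g) = 1


/-! ### Auxiliary lemmas for statement4 -/

lemma mem_S_g (t : Fin (n + 1)) : g t ∈ S g := AddSubmonoid.subset_closure ⟨t, rfl⟩

lemma g0_pos (hg : MinGen g) : 0 < g 0 := by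
  by_contra h
  push_neg at h
  have h0 : g 0 = 0 := Nat.le_zero.mp h
  exact hg.minimal 0 (by rw [h0]; exact zero_mem _)

lemma g0_le (hg : MinGen g) (t : Fin (n + 1)) : g 0 ≤ g t :=
  hg.smono.monotone (Fin.zero_le t)

lemma ge_g0_of_mem (hg : MinGen g) {u : ℕ} (hu : u ∈ S g) : u ≠ 0 → g 0 ≤ u := by
  induction hu using AddSubmonoid.closure_induction with
  | mem y hy => intro _; obtain ⟨t, rfl⟩ := hy; exact g0_le g hg t
  | zero => intro h; exact absurd rfl h
  | add x y hx hy px py =>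
    intro h
    by_cases hx0 : x = 0
    · rw [hx0, zero_add] at h ⊢; exact py h
    · exact le_trans (px hx0) (Nat.le_add_right x y)

lemma g_ne_zero (hg : MinGen g) (t : Fin (n + 1)) : g t ≠ 0 := by
  have := g0_pos g hg
  have := g0_le g hg t
  omega

lemma mem_setM_succ {u z h : ℕ} (hu : u ∈ S g) (hune : u ≠ 0) (hz : z ∈ setM g h) :
    u + z ∈ setM g (h + 1) := by
  show u + z ∈ ({u : ℕ | u ∈ S g ∧ u ≠ 0} + setM g h : Set ℕ)
  exact Set.mem_add.mpr ⟨u, ⟨hu, hune⟩, z, hz, rfl⟩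

lemma setM_add_S : ∀ (h : ℕ) {z s : ℕ}, z ∈ setM g h → s ∈ S g → z + s ∈ setM g h := by
  intro h
  induction h with
  | zero => intro z s hz hs; exact add_mem hz hs
  | succ h ih =>
    rintro z s ⟨u, hu, v, hv, huv⟩ hs
    have huv' : u + v = z := huv
    have : u + (v + s) = z + s := by omega
    rw [← this]
    exact mem_setM_succ g hu.1 hu.2 (ih hv hs)

lemma setM_succ_subset {h : ℕ} : setM g (h + 1) ⊆ setM g h := by
  rintro z ⟨u, hu, v, hv, huv⟩
  have huv' : u + v = z := huv
  have h1 : v + u ∈ setM g h := setM_add_S g h hv hu.1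
  rwa [show v + u = z by omega] at h1

lemma setM_add_subset (h d : ℕ) : setM g (h + d) ⊆ setM g h := by
  induction d with
  | zero => exact fun z hz => hz
  | succ d ih => exact fun z hz => ih (setM_succ_subset g hz)

lemma setM_antitone {h h' : ℕ} (hle : h' ≤ h) : setM g h ⊆ setM g h' := by
  have he : h' + (h - h') = h := by omega
  rw [← he]
  exact setM_add_subset g h' (h - h')

lemma add_mem_setM : ∀ (a : ℕ) {b z w : ℕ}, z ∈ setM g a → w ∈ setM g b →
    z + w ∈ setM g (a + b) := by
  intro a
  induction a with
  | zero =>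
    intro b z w hz hw
    rw [Nat.zero_add, add_comm z w]
    exact setM_add_S g b hw hz
  | succ a ih =>
    rintro b z w ⟨u, hu, v, hv, huv⟩ hw
    have huv' : u + v = z := huv
    have he : a + 1 + b = (a + b) + 1 := by omega
    rw [he, show z + w = u + (v + w) by omega]
    exact mem_setM_succ g hu.1 hu.2 (ih hv hw)

lemma bddAbove_setM_set (z : ℕ) : BddAbove {h | z ∈ setM g h} :=
  ⟨z, fun h hh => le_of_mem_setM g h z hh⟩

lemma ordS_ge {z h : ℕ} (hz : z ∈ setM g h) : h ≤ ordS g z :=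
  le_csSup (bddAbove_setM_set g z) hz

lemma ordS_add_g0 (hg : MinGen g) {z : ℕ} (hz : z ∈ S g) :
    ordS g z + 1 ≤ ordS g (z + g 0) := by
  apply ordS_ge
  rw [add_comm z (g 0)]
  exact mem_setM_succ g (mem_S_g g 0) (by have := g0_pos g hg; omega) (mem_setM_ordS g hz)

lemma mul_g0_mem (l : ℕ) : l * g 0 ∈ S g := by
  induction l with
  | zero => simpa using (S g).zero_mem
  | succ l ih =>
    have h1 := add_mem ih (mem_S_g g 0)
    rwa [show l * g 0 + g 0 = (l + 1) * g 0 by ring] at h1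

/-! #### Multiset decompositions and the reduction step -/

lemma exists_multiset_of_mem_S {z : ℕ} (hz : z ∈ S g) :
    ∃ m : Multiset ℕ, (∀ y ∈ m, y ∈ Set.range g) ∧ m.sum = z := by
  induction hz using AddSubmonoid.closure_induction with
  | mem y hy => exact ⟨{y}, by simpa using hy, by simp⟩
  | zero => exact ⟨0, by simp, rfl⟩
  | add x y hx hy px py =>
    obtain ⟨mx, hmx, hx'⟩ := px
    obtain ⟨my, hmy, hy'⟩ := py
    refine ⟨mx + my, fun u hu => ?_, by rw [Multiset.sum_add, hx', hy']⟩
    rcases Multiset.mem_add.mp hu with h | h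
    exacts [hmx u h, hmy u h]

lemma exists_multiset_of_mem_setM : ∀ (h : ℕ) {z : ℕ}, z ∈ setM g h →
    ∃ m : Multiset ℕ, (∀ y ∈ m, y ∈ Set.range g) ∧ m.sum = z ∧ h ≤ Multiset.card m := by
  intro h
  induction h with
  | zero =>
    intro z hz
    obtain ⟨m, hm, hsum⟩ := exists_multiset_of_mem_S g hz
    exact ⟨m, hm, hsum, Nat.zero_le _⟩
  | succ h ih =>
    rintro z ⟨u, hu, v, hv, huv⟩
    have huv' : u + v = z := huv
    obtain ⟨mu, hmu, hsumu⟩ := exists_multiset_of_mem_S g hu.1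
    obtain ⟨mv, hmv, hsumv, hcard⟩ := ih hv
    have hne : mu ≠ 0 := by
      intro h0
      rw [h0] at hsumu
      exact hu.2 (by simpa using hsumu.symm)
    refine ⟨mu + mv, fun y hy => ?_, ?_, ?_⟩
    · rcases Multiset.mem_add.mp hy with h' | h'
      exacts [hmu y h', hmv y h']
    · rw [Multiset.sum_add, hsumu, hsumv]; exact huv'
    · have h1 : 0 < Multiset.card mu := Multiset.card_pos.mpr hne
      rw [Multiset.card_add]; omega

lemma multiset_sum_mem_setM (hg : MinGen g) (m : Multiset ℕ) :
    (∀ y ∈ m, y ∈ Set.range g) → m.sum ∈ setM g (Multiset.card m) := by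
  induction m using Multiset.induction with
  | empty => intro _; simpa [setM] using (S g).zero_mem
  | cons a s ih =>
    intro hm
    have ha : a ∈ Set.range g := hm a (Multiset.mem_cons_self a s)
    have hs : ∀ y ∈ s, y ∈ Set.range g := fun y hy => hm y (Multiset.mem_cons_of_mem hy)
    obtain ⟨t, rfl⟩ := ha
    rw [Multiset.sum_cons, Multiset.card_cons]
    exact mem_setM_succ g (mem_S_g g t) (g_ne_zero g hg t) (ih hs)

lemma reduction_step (hg : MinGen g) {z : ℕ} (hz : z ∈ setM g (n * g 0 + 1)) :
    ∃ z', z = g 0 + z' ∧ z' ∈ setM g (n * g 0) := by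
  classical
  obtain ⟨m, hm, hsum, hcard⟩ := exists_multiset_of_mem_setM g (n * g 0 + 1) hz
  by_cases h0 : g 0 ∈ m
  · refine ⟨(m.erase (g 0)).sum, ?_, ?_⟩
    · rw [← hsum, ← Multiset.sum_cons, Multiset.cons_erase h0]
    · have hmem : ∀ y ∈ m.erase (g 0), y ∈ Set.range g :=
        fun y hy => hm y (Multiset.mem_of_mem_erase hy)
      have h1 := multiset_sum_mem_setM g hg (m.erase (g 0)) hmem
      have hcard' : n * g 0 ≤ Multiset.card (m.erase (g 0)) := by
        rw [Multiset.card_erase_of_mem h0, Nat.pred_eq_sub_one]; omega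
      exact setM_antitone g hcard' h1
  · -- pigeonhole: some non-g0 generator value occurs ≥ g 0 + 1 times
    have hval : ∀ y ∈ m, g 0 + 1 ≤ y := by
      intro y hy
      obtain ⟨t, rfl⟩ := hm y hy
      have h1 : g 0 ≤ g t := g0_le g hg t
      rcases Nat.lt_or_ge (g 0) (g t) with h | h
      · omega
      · exfalso; exact h0 (by rwa [show g 0 = g t by omega] )
    have htf : m.toFinset.card ≤ n := by
      have h1 : m.toFinset ⊆ (Finset.univ.image g).erase (g 0) := by
        intro y hy
        rw [Multiset.mem_toFinset] at hy
        refine Finset.mem_erase.mpr ⟨?_, ?_⟩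
        · have := hval y hy; omega
        · obtain ⟨t, rfl⟩ := hm y hy
          exact Finset.mem_image.mpr ⟨t, Finset.mem_univ t, rfl⟩
      calc m.toFinset.card ≤ ((Finset.univ.image g).erase (g 0)).card := Finset.card_le_card h1
        _ ≤ (Finset.univ.image g).card - 1 := le_of_eq (Finset.card_erase_of_mem
              (Finset.mem_image.mpr ⟨0, Finset.mem_univ 0, rfl⟩))
        _ ≤ (n + 1) - 1 := by
              have := Finset.card_image_le (s := (Finset.univ : Finset (Fin (n+1)))) (f := g)
              simp only [Finset.card_univ, Fintype.card_fin] at this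
              omega
        _ = n := rfl
    have hpig : ∃ y ∈ m.toFinset, g 0 + 1 ≤ m.count y := by
      by_contra hcon
      push_neg at hcon
      have h1 : Multiset.card m ≤ m.toFinset.card * (g 0) := by
        calc Multiset.card m = ∑ y ∈ m.toFinset, m.count y :=
              (Multiset.toFinset_sum_count_eq m).symm
          _ ≤ ∑ _y ∈ m.toFinset, g 0 := Finset.sum_le_sum (fun y hy => by
              have := hcon y hy; omega)
          _ = m.toFinset.card * g 0 := by rw [Finset.sum_const, smul_eq_mul]
      have h2 : m.toFinset.card * g 0 ≤ n * g 0 := Nat.mul_le_mul_right _ htf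
      omega
    obtain ⟨y, hyf, hycount⟩ := hpig
    have hyle : Multiset.replicate (g 0) y ≤ m :=
      Multiset.le_count_iff_replicate_le.mp (by omega)
    obtain ⟨rest, hrest⟩ := Multiset.le_iff_exists_add.mp hyle
    have hym : y ∈ m := Multiset.mem_toFinset.mp hyf
    have hy1 : g 0 + 1 ≤ y := hval y hym
    -- z = g0 * y + rest.sum
    have hzeq : z = g 0 * y + rest.sum := by
      rw [← hsum, hrest, Multiset.sum_add, Multiset.sum_replicate, smul_eq_mul]
    have hrestrange : ∀ u ∈ rest, u ∈ Set.range g := by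
      intro u hu
      exact hm u (by rw [hrest]; exact Multiset.mem_add.mpr (Or.inr hu))
    have hrestmem : rest.sum ∈ setM g (Multiset.card rest) :=
      multiset_sum_mem_setM g hg rest hrestrange
    have hcardrest : Multiset.card rest = Multiset.card m - g 0 := by
      have := congrArg Multiset.card hrest
      rw [Multiset.card_add, Multiset.card_replicate] at this
      omega
    -- g0 * (y-1) is a sum of (y-1) copies of g0
    have hblock : g 0 * (y - 1) ∈ setM g (y - 1) := by
      have h1 := multiset_sum_mem_setM g hg (Multiset.replicate (y - 1) (g 0))
        (fun u hu => by rw [Multiset.eq_of_mem_replicate hu]; exact ⟨0, rfl⟩)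
      rwa [Multiset.sum_replicate, Multiset.card_replicate, smul_eq_mul, mul_comm] at h1
    have hn1 : 1 ≤ m.toFinset.card := Finset.card_pos.mpr ⟨y, hyf⟩
    have hng : g 0 ≤ n * g 0 := Nat.le_mul_of_pos_left _ (by omega)
    have e3 : g 0 * (y - 1) = g 0 * y - g 0 * 1 := Nat.mul_sub (g 0) y 1
    have e4 : g 0 * 1 ≤ g 0 * y := Nat.mul_le_mul_left _ (by omega)
    refine ⟨g 0 * (y - 1) + rest.sum, by omega, ?_⟩
    have h2 : g 0 * (y - 1) + rest.sum ∈ setM g ((y - 1) + Multiset.card rest) :=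
      add_mem_setM g (y - 1) hblock hrestmem
    exact setM_antitone g (by omega) h2
/-! #### Coefficient support lemmas -/

lemma tR_coe {s : ℕ} (hs : s ∈ S g) :
    (tR k g s : PowerSeries k) = PowerSeries.monomial s 1 := by
  rw [tR, dif_pos hs]

lemma coeff_mI (hg : MinGen g) {a : Rsub k g} (ha : a ∈ mI k g) :
    ∀ c : ℕ, PowerSeries.coeff c (a : PowerSeries k) ≠ 0 → c ∈ S g ∧ c ≠ 0 := by
  have ha' : a ∈ Ideal.span (Set.range fun t => tR k g (g t)) := ha
  clear ha
  induction ha' using Submodule.span_induction with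
  | mem x hx =>
    obtain ⟨t, rfl⟩ := hx
    intro c hc
    rw [tR_coe k g (mem_S_g g t), PowerSeries.coeff_monomial] at hc
    split at hc
    · next h => exact h ▸ ⟨mem_S_g g t, g_ne_zero g hg t⟩
    · exact absurd rfl hc
  | zero => intro c hc; simp at hc
  | add x y hx hy px py =>
    intro c hc
    rw [show ((x + y : Rsub k g) : PowerSeries k) = (x : PowerSeries k) + y from rfl,
      map_add] at hc
    by_cases h : PowerSeries.coeff c (x : PowerSeries k) = 0
    · exact py c (by rwa [h, zero_add] at hc)
    · exact px c h
  | smul r x hx px =>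
    intro c hc
    rw [show ((r • x : Rsub k g) : PowerSeries k) = (r : PowerSeries k) * x from rfl,
      PowerSeries.coeff_mul] at hc
    obtain ⟨p, hp, hne⟩ := Finset.exists_ne_zero_of_sum_ne_zero hc
    have h1 : p.1 ∈ S g := r.2 p.1 (left_ne_zero_of_mul hne)
    obtain ⟨h2, h3⟩ := px p.2 (right_ne_zero_of_mul hne)
    have hc' : p.1 + p.2 = c := Finset.HasAntidiagonal.mem_antidiagonal.mp hp
    rw [← hc']
    exact ⟨add_mem h1 h2, by omega⟩

lemma coeff_pow_mem_setM (hg : MinGen g) :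
    ∀ (E : ℕ) {f : Rsub k g}, f ∈ (mI k g) ^ E →
    ∀ c : ℕ, PowerSeries.coeff c (f : PowerSeries k) ≠ 0 → c ∈ setM g E := by
  intro E
  induction E with
  | zero => intro f _ c hc; exact f.2 c hc
  | succ E ih =>
    intro f hf
    rw [pow_succ'] at hf
    refine Submodule.mul_induction_on hf ?_ ?_
    · intro a ha b hb c hc
      rw [show ((a * b : Rsub k g) : PowerSeries k) = (a : PowerSeries k) * b from rfl,
        PowerSeries.coeff_mul] at hc
      obtain ⟨p, hp, hne⟩ := Finset.exists_ne_zero_of_sum_ne_zero hc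
      obtain ⟨h1, h2⟩ := coeff_mI k g hg ha p.1 (left_ne_zero_of_mul hne)
      have h3 := ih hb p.2 (right_ne_zero_of_mul hne)
      have hc' : p.1 + p.2 = c := Finset.HasAntidiagonal.mem_antidiagonal.mp hp
      rw [← hc']
      exact mem_setM_succ g h1 h2 h3
    · intro x y px py c hc
      rw [show ((x + y : Rsub k g) : PowerSeries k) = (x : PowerSeries k) + y from rfl,
        map_add] at hc
      by_cases h : PowerSeries.coeff c (x : PowerSeries k) = 0
      · exact py c (by rwa [h, zero_add] at hc)
      · exact px c h

lemma tR_mem_pow_iff (hg : MinGen g) {z E : ℕ} (hz : z ∈ S g) :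
    tR k g z ∈ (mI k g) ^ E ↔ z ∈ setM g E := by
  constructor
  · intro h
    refine coeff_pow_mem_setM k g hg E h z ?_
    rw [tR_coe k g hz, PowerSeries.coeff_monomial, if_pos rfl]
    exact one_ne_zero
  · exact tR_mem_pow_of_setM k g E z

/-! #### The reduction property of the principal ideal generated by `t^{g 0}` -/

lemma span_setM_le (hg : MinGen g) :
    ∀ E : ℕ, (mI k g) ^ E ≤ Ideal.span (tR k g '' setM g E) := by
  intro E
  induction E with
  | zero =>
    rw [pow_zero, Ideal.one_eq_top]
    have h1 : (1 : Rsub k g) ∈ tR k g '' setM g 0 := by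
      refine ⟨0, zero_mem (S g), ?_⟩
      apply Subtype.ext
      rw [tR_coe k g (zero_mem (S g))]
      simp
    rw [(Ideal.eq_top_iff_one _).mpr (Ideal.subset_span h1)]
  | succ E ih =>
    rw [pow_succ]
    calc (mI k g) ^ E * mI k g
        ≤ Ideal.span (tR k g '' setM g E) * Ideal.span (Set.range fun t => tR k g (g t)) :=
          Ideal.mul_mono ih le_rfl
      _ = Ideal.span (⋃ s ∈ tR k g '' setM g E,
            ⋃ u ∈ (Set.range fun t => tR k g (g t)), {s * u}) :=
          (Ideal.span_mul_span _ _).trans (congr_arg Ideal.span (Set.ext fun _ => by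
            simp only [Set.mem_mul, Set.mem_iUnion, Set.mem_singleton_iff, exists_prop]
            constructor <;> rintro ⟨a, ha, b, hb, h⟩ <;> exact ⟨a, ha, b, hb, h.symm⟩))
      _ ≤ Ideal.span (tR k g '' setM g (E + 1)) := by
          rw [Ideal.span_le]
          intro x hx
          simp only [Set.mem_iUnion, Set.mem_singleton_iff] at hx
          obtain ⟨s, ⟨v, hv, rfl⟩, u, ⟨t, rfl⟩, rfl⟩ := hx
          refine Ideal.subset_span ⟨v + g t, ?_, ?_⟩
          · rw [add_comm v (g t)]
            exact mem_setM_succ g (mem_S_g g t) (g_ne_zero g hg t) hv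
          · exact tR_mul k g (setM_subset g E hv) (mem_S_g g t)

lemma rset_mem (hg : MinGen g) :
    (mI k g) ^ (n * g 0 + 1) = Ideal.span {tR k g (g 0)} * (mI k g) ^ (n * g 0) := by
  apply le_antisymm
  · calc (mI k g) ^ (n * g 0 + 1) ≤ Ideal.span (tR k g '' setM g (n * g 0 + 1)) :=
        span_setM_le k g hg _
      _ ≤ Ideal.span {tR k g (g 0)} * (mI k g) ^ (n * g 0) := by
        rw [Ideal.span_le]
        rintro x ⟨z, hz, rfl⟩
        obtain ⟨z', hzeq, hz'⟩ := reduction_step g hg hz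
        rw [hzeq, tR_mul k g (mem_S_g g 0) (setM_subset g _ hz')]
        exact Ideal.mul_mem_mul (Ideal.subset_span rfl) (tR_mem_pow_of_setM k g _ _ hz')
  · rw [pow_succ']
    refine Ideal.mul_mono ?_ le_rfl
    rw [Ideal.span_le, Set.singleton_subset_iff]
    exact tR_mem_mI k g (mem_S_g g 0) (by have := g0_pos g hg; omega)

lemma red_pow (hg : MinGen g) {h : ℕ} (hle : rnum k g ≤ h) :
    (mI k g) ^ (h + 1) = Ideal.span {tR k g (g 0)} * (mI k g) ^ h := by
  induction h, hle using Nat.le_induction with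
  | base =>
    have h1 := Nat.sInf_mem (s := {j | (mI k g) ^ (j + 1)
        = Ideal.span {tR k g (g 0)} * (mI k g) ^ j}) ⟨n * g 0, rset_mem k g hg⟩
    exact h1
  | succ m hm ih =>
    conv_lhs => rw [pow_succ, ih]
    rw [mul_assoc, ← pow_succ]

lemma descent (hg : MinGen g) {z h : ℕ} (hz : z ∈ S g) (hh : rnum k g ≤ h)
    (hmem : tR k g (z + g 0) ∈ (mI k g) ^ (h + 1)) : z ∈ setM g h := by
  rw [red_pow k g hg hh] at hmem
  obtain ⟨f, hf, heq⟩ := Ideal.mem_span_singleton_mul.mp hmem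
  have hval : (f : PowerSeries k) = PowerSeries.monomial z 1 := by
    have h1 : (PowerSeries.monomial (g 0)) (1 : k) * (f : PowerSeries k)
        = PowerSeries.monomial (z + g 0) 1 := by
      have h0 := congrArg Subtype.val heq
      rw [show ((tR k g (g 0) * f : Rsub k g) : PowerSeries k)
          = (tR k g (g 0) : PowerSeries k) * f from rfl] at h0
      rw [tR_coe k g (mem_S_g g 0), tR_coe k g (add_mem hz (mem_S_g g 0))] at h0
      exact h0
    have h2 : (PowerSeries.monomial (g 0)) (1 : k) * (PowerSeries.monomial z) 1
        = PowerSeries.monomial (z + g 0) 1 := by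
      rw [← PowerSeries.X_pow_eq, ← PowerSeries.X_pow_eq, ← PowerSeries.X_pow_eq,
        ← pow_add, add_comm (g 0) z]
    have h3 : (PowerSeries.monomial (g 0)) (1 : k) ≠ 0 := by
      intro hcon
      have h4 := congrArg (PowerSeries.coeff (g 0)) hcon
      rw [PowerSeries.coeff_monomial, if_pos rfl] at h4
      simpa using h4
    apply mul_left_cancel₀ h3
    rw [h1, h2]
  refine coeff_pow_mem_setM k g hg h hf z ?_
  rw [hval, PowerSeries.coeff_monomial, if_pos rfl]
  exact one_ne_zero

/-! #### Initial-form monomials in the associated graded ring -/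

open Classical in
/-- The class of the Rees-algebra monomial `t^f · T^D` in `G(m)` (zero if `f ∉ m^D`). -/
def grM (D : ℕ) (f : Rsub k g) : grG k g :=
  if h : f ∈ (mI k g) ^ D then
    Ideal.Quotient.mk _ ⟨Polynomial.monomial D f, reesAlgebra.monomial_mem.mpr h⟩
  else 0

lemma tstar_eq (z : ℕ) : tstar k g z = grM k g (ordS g z) (tR k g z) := by
  unfold tstar grM
  rw [dif_pos (tR_mem_pow k g z)]

lemma mul_mem_pow_add {D E : ℕ} {f f' : Rsub k g} (hf : f ∈ (mI k g) ^ D)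
    (hf' : f' ∈ (mI k g) ^ E) : f * f' ∈ (mI k g) ^ (D + E) := by
  rw [pow_add]; exact Ideal.mul_mem_mul hf hf'

lemma grM_mul {D E : ℕ} {f f' : Rsub k g} (hf : f ∈ (mI k g) ^ D)
    (hf' : f' ∈ (mI k g) ^ E) :
    grM k g D f * grM k g E f' = grM k g (D + E) (f * f') := by
  unfold grM
  rw [dif_pos hf, dif_pos hf', dif_pos (mul_mem_pow_add k g hf hf'), ← map_mul]
  congr 1
  apply Subtype.ext
  show Polynomial.monomial D f * Polynomial.monomial E f' = Polynomial.monomial (D + E) (f * f')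
  rw [Polynomial.monomial_mul_monomial]

lemma grM_add {D : ℕ} {f f' : Rsub k g} (hf : f ∈ (mI k g) ^ D) (hf' : f' ∈ (mI k g) ^ D) :
    grM k g D (f + f') = grM k g D f + grM k g D f' := by
  unfold grM
  rw [dif_pos hf, dif_pos hf', dif_pos (add_mem hf hf'), ← map_add]
  congr 1
  apply Subtype.ext
  show Polynomial.monomial D (f + f') = Polynomial.monomial D f + Polynomial.monomial D f'
  rw [map_add]

lemma grM_smul {D : ℕ} (r : Rsub k g) {f : Rsub k g} (hf : f ∈ (mI k g) ^ D) :
    grM k g D (r * f) =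
      Ideal.Quotient.mk _ (algebraMap (Rsub k g) (reesAlgebra (mI k g)) r) * grM k g D f := by
  unfold grM
  rw [dif_pos hf, dif_pos (Ideal.mul_mem_left _ r hf), ← map_mul]
  congr 1
  apply Subtype.ext
  show Polynomial.monomial D (r * f) = Polynomial.C r * Polynomial.monomial D f
  rw [Polynomial.C_mul_monomial]

lemma grM_zero (D : ℕ) : grM k g D 0 = 0 := by
  unfold grM
  rw [dif_pos (zero_mem _)]
  have h1 : (⟨Polynomial.monomial D (0 : Rsub k g), reesAlgebra.monomial_mem.mpr
      (zero_mem _)⟩ : reesAlgebra (mI k g)) = 0 := by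
    apply Subtype.ext
    show Polynomial.monomial D (0 : Rsub k g) = 0
    simp
  rw [h1, map_zero]

lemma coeff_mem_of_mem_map {F : reesAlgebra (mI k g)}
    (hF : F ∈ Ideal.map (algebraMap (Rsub k g) (reesAlgebra (mI k g))) (mI k g)) :
    ∀ d : ℕ, ((F : Polynomial (Rsub k g)).coeff d) ∈ (mI k g) ^ (d + 1) := by
  have hF' : F ∈ Submodule.span (reesAlgebra (mI k g))
      ((algebraMap (Rsub k g) (reesAlgebra (mI k g))) '' (mI k g)) := hF
  clear hF
  induction hF' using Submodule.span_induction with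
  | mem x hx =>
    obtain ⟨a, ha, rfl⟩ := hx
    intro d
    show (Polynomial.C a).coeff d ∈ _
    rw [Polynomial.coeff_C]
    split
    · next h => subst h; simpa using ha
    · exact zero_mem _
  | zero =>
    intro d
    show (0 : Polynomial (Rsub k g)).coeff d ∈ _
    rw [Polynomial.coeff_zero]
    exact zero_mem _
  | add x y hx hy px py =>
    intro d
    show ((x : Polynomial (Rsub k g)) + y).coeff d ∈ _
    rw [Polynomial.coeff_add]
    exact add_mem (px d) (py d)
  | smul r x hx px =>
    intro d
    show ((r : Polynomial (Rsub k g)) * x).coeff d ∈ _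
    rw [Polynomial.coeff_mul]
    refine Submodule.sum_mem _ ?_
    rintro ⟨p, q⟩ hpq
    have h1 : (r : Polynomial (Rsub k g)).coeff p ∈ (mI k g) ^ p := r.2 p
    have h2 := px q
    have h3 : p + q = d := Finset.HasAntidiagonal.mem_antidiagonal.mp hpq
    have h4 : (mI k g) ^ p * (mI k g) ^ (q + 1) = (mI k g) ^ (d + 1) := by
      rw [← pow_add]
      congr 1
      omega
    rw [← h4]
    exact Ideal.mul_mem_mul h1 h2

lemma exists_map_of_monomial (D : ℕ) {f : Rsub k g} (hf : f ∈ (mI k g) ^ (D + 1)) :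
    ∃ F ∈ Ideal.map (algebraMap (Rsub k g) (reesAlgebra (mI k g))) (mI k g),
      (F : Polynomial (Rsub k g)) = Polynomial.monomial D f := by
  rw [pow_succ'] at hf
  refine Submodule.mul_induction_on hf ?_ ?_
  · intro a ha b hb
    refine ⟨algebraMap (Rsub k g) (reesAlgebra (mI k g)) a *
      ⟨Polynomial.monomial D b, reesAlgebra.monomial_mem.mpr hb⟩,
      Ideal.mul_mem_right _ _ (Ideal.mem_map_of_mem _ ha), ?_⟩
    show Polynomial.C a * Polynomial.monomial D b = _
    rw [Polynomial.C_mul_monomial]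
  · rintro x y ⟨F1, hF1, hFv1⟩ ⟨F2, hF2, hFv2⟩
    refine ⟨F1 + F2, add_mem hF1 hF2, ?_⟩
    show (F1 : Polynomial (Rsub k g)) + F2 = _
    rw [hFv1, hFv2, map_add]

lemma grM_eq_zero_iff {D : ℕ} {f : Rsub k g} (hf : f ∈ (mI k g) ^ D) :
    grM k g D f = 0 ↔ f ∈ (mI k g) ^ (D + 1) := by
  unfold grM
  rw [dif_pos hf]
  constructor
  · intro h
    have hmem := Ideal.Quotient.eq_zero_iff_mem.mp h
    have h2 := coeff_mem_of_mem_map k g hmem D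
    rwa [show ((⟨Polynomial.monomial D f, reesAlgebra.monomial_mem.mpr hf⟩ :
      reesAlgebra (mI k g)) : Polynomial (Rsub k g)) = Polynomial.monomial D f from rfl,
      Polynomial.coeff_monomial, if_pos rfl] at h2
  · intro h
    obtain ⟨F, hF, hFv⟩ := exists_map_of_monomial k g D h
    have he : (⟨Polynomial.monomial D f, reesAlgebra.monomial_mem.mpr hf⟩ :
        reesAlgebra (mI k g)) = F := Subtype.ext hFv.symm
    rw [he]
    exact Ideal.Quotient.eq_zero_iff_mem.mpr hF

/-! #### Generators of the homogeneous maximal ideal -/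

lemma grM_gen_mem_MM (t : Fin (n + 1)) : grM k g 1 (tR k g (g t)) ∈ MM k g := by
  have hmem : tR k g (g t) ∈ (mI k g) ^ 1 := by
    rw [pow_one]; exact Ideal.subset_span ⟨t, rfl⟩
  unfold grM
  rw [dif_pos hmem]
  apply Ideal.mem_map_of_mem
  rw [Ideal.mem_comap]
  show Polynomial.eval 0 (Polynomial.monomial 1 (tR k g (g t))) ∈ mI k g
  rw [Polynomial.eval_monomial, pow_one, mul_zero]
  exact zero_mem _

def xiSet : Set (grG k g) := Set.range fun t => grM k g 1 (tR k g (g t))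

lemma grM_one_mem_span {c : Rsub k g} (hc : c ∈ mI k g) :
    grM k g 1 c ∈ Ideal.span (xiSet k g) := by
  have hc' : c ∈ Ideal.span (Set.range fun t => tR k g (g t)) := hc
  clear hc
  induction hc' using Submodule.span_induction with
  | mem x hx =>
    obtain ⟨t, rfl⟩ := hx
    exact Ideal.subset_span ⟨t, rfl⟩
  | zero => rw [grM_zero]; exact zero_mem _
  | add x y hx hy px py =>
    have hx1 : x ∈ (mI k g) ^ 1 := by rw [pow_one]; exact hx
    have hy1 : y ∈ (mI k g) ^ 1 := by rw [pow_one]; exact hy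
    rw [grM_add k g hx1 hy1]
    exact add_mem px py
  | smul a x hx px =>
    have hx1 : x ∈ (mI k g) ^ 1 := by rw [pow_one]; exact hx
    have hax : a • x = a * x := rfl
    rw [hax, grM_smul k g a hx1]
    exact Ideal.mul_mem_left _ _ px

lemma grM_mem_span_xi : ∀ (d : ℕ), 0 < d → ∀ {c : Rsub k g}, c ∈ (mI k g) ^ d →
    grM k g d c ∈ Ideal.span (xiSet k g) := by
  intro d
  induction d with
  | zero => intro h; exact absurd h (lt_irrefl 0)
  | succ d ih =>
    intro _ c hc
    rcases Nat.eq_zero_or_pos d with rfl | hd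
    · exact grM_one_mem_span k g (by rwa [pow_one] at hc)
    · rw [pow_succ] at hc
      have key : c ∈ (mI k g) ^ d * mI k g ∧ grM k g (d + 1) c ∈ Ideal.span (xiSet k g) := by
        refine Submodule.mul_induction_on hc (fun a ha b hb => ?_) (fun x y px py => ?_)
        · constructor
          · exact Ideal.mul_mem_mul ha hb
          · have hb1 : b ∈ (mI k g) ^ 1 := by rw [pow_one]; exact hb
            rw [← grM_mul k g ha hb1]
            exact Ideal.mul_mem_left _ _ (grM_one_mem_span k g hb)
        · refine ⟨add_mem px.1 py.1, ?_⟩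
          have hx1 : x ∈ (mI k g) ^ (d + 1) := by rw [pow_succ]; exact px.1
          have hy1 : y ∈ (mI k g) ^ (d + 1) := by rw [pow_succ]; exact py.1
          rw [grM_add k g hx1 hy1]
          exact add_mem px.2 py.2
      exact key.2

lemma MM_le_span_xi : MM k g ≤ Ideal.span (xiSet k g) := by
  show Ideal.map (Ideal.Quotient.mk
      (Ideal.map (algebraMap (Rsub k g) (reesAlgebra (mI k g))) (mI k g)))
    (Ideal.comap ((Polynomial.evalRingHom (0 : Rsub k g)).comp
      (reesAlgebra (mI k g)).val.toRingHom) (mI k g)) ≤ Ideal.span (xiSet k g)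
  rw [Ideal.map_le_iff_le_comap]
  intro F hF
  rw [Ideal.mem_comap] at hF ⊢
  have hF0 : (F : Polynomial (Rsub k g)).coeff 0 ∈ mI k g := by
    rw [Polynomial.coeff_zero_eq_eval_zero]
    exact hF
  have hdecomp : F = ∑ d ∈ (F : Polynomial (Rsub k g)).support,
      (⟨Polynomial.monomial d ((F : Polynomial (Rsub k g)).coeff d),
        reesAlgebra.monomial_mem.mpr (F.2 d)⟩ : reesAlgebra (mI k g)) := by
    apply Subtype.ext
    rw [AddSubmonoidClass.coe_finset_sum]
    exact Polynomial.as_sum_support (F : Polynomial (Rsub k g))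
  rw [hdecomp, map_sum]
  refine Submodule.sum_mem _ ?_
  intro d _
  rcases Nat.eq_zero_or_pos d with rfl | hdpos
  · have he : (⟨Polynomial.monomial 0 ((F : Polynomial (Rsub k g)).coeff 0),
        reesAlgebra.monomial_mem.mpr (F.2 0)⟩ : reesAlgebra (mI k g))
        = algebraMap (Rsub k g) (reesAlgebra (mI k g))
          ((F : Polynomial (Rsub k g)).coeff 0) := by
      apply Subtype.ext
      show Polynomial.monomial 0 ((F : Polynomial (Rsub k g)).coeff 0)
        = Polynomial.C ((F : Polynomial (Rsub k g)).coeff 0)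
      rw [Polynomial.monomial_zero_left]
    rw [he]
    have hz : Ideal.Quotient.mk
        (Ideal.map (algebraMap (Rsub k g) (reesAlgebra (mI k g))) (mI k g))
        (algebraMap (Rsub k g) (reesAlgebra (mI k g))
          ((F : Polynomial (Rsub k g)).coeff 0)) = 0 :=
      Ideal.Quotient.eq_zero_iff_mem.mpr (Ideal.mem_map_of_mem _ hF0)
    rw [hz]
    exact zero_mem _
  · have h1 := grM_mem_span_xi k g d hdpos (F.2 d)
    unfold grM at h1
    rwa [dif_pos (F.2 d)] at h1
/-! #### Sums of generators and powers of the maximal homogeneous ideal -/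

def Wsum : ℕ → Set ℕ
  | 0 => {0}
  | r + 1 => {w | ∃ w' ∈ Wsum r, ∃ t, w = w' + g t}

lemma Wsum_mem_S : ∀ (r : ℕ) {w : ℕ}, w ∈ Wsum g r → w ∈ S g := by
  intro r
  induction r with
  | zero => intro w hw; rw [Set.eq_of_mem_singleton hw]; exact zero_mem _
  | succ r ih =>
    rintro w ⟨w', hw', t, rfl⟩
    exact add_mem (ih hw') (mem_S_g g t)

lemma Wsum_mem_setM (hg : MinGen g) : ∀ (r : ℕ) {w : ℕ}, w ∈ Wsum g r → w ∈ setM g r := by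
  intro r
  induction r with
  | zero => intro w hw; rw [Set.eq_of_mem_singleton hw]; exact zero_mem (S g)
  | succ r ih =>
    rintro w ⟨w', hw', t, rfl⟩
    rw [add_comm w' (g t)]
    exact mem_setM_succ g (mem_S_g g t) (g_ne_zero g hg t) (ih hw')

def PSet (r : ℕ) : Set (grG k g) := {x | ∃ w ∈ Wsum g r, x = grM k g r (tR k g w)}

lemma tR_zero : tR k g 0 = 1 := by
  apply Subtype.ext
  rw [tR_coe k g (zero_mem (S g))]
  show PowerSeries.monomial 0 (1:k) = 1
  simp

lemma tR_zero_mem_pow_zero : tR k g 0 ∈ (mI k g) ^ 0 := by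
  rw [pow_zero, Ideal.one_eq_top]
  exact Submodule.mem_top

lemma grM_zero_one : grM k g 0 (tR k g 0) = 1 := by
  unfold grM
  rw [dif_pos (tR_zero_mem_pow_zero k g)]
  have h1 : (⟨Polynomial.monomial 0 (tR k g 0), reesAlgebra.monomial_mem.mpr
      (tR_zero_mem_pow_zero k g)⟩ : reesAlgebra (mI k g)) = 1 := by
    apply Subtype.ext
    show Polynomial.monomial 0 (tR k g 0) = 1
    rw [tR_zero, Polynomial.monomial_zero_left, map_one]
  rw [h1, map_one]

lemma PSet_mem_MMpow (hg : MinGen g) : ∀ (r : ℕ) {w : ℕ}, w ∈ Wsum g r →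
    grM k g r (tR k g w) ∈ (MM k g) ^ r := by
  intro r
  induction r with
  | zero =>
    intro w hw
    rw [Set.eq_of_mem_singleton hw, grM_zero_one, Submodule.pow_zero, Ideal.one_eq_top]
    exact Submodule.mem_top
  | succ r ih =>
    rintro w ⟨w', hw', t, rfl⟩
    have h1 : tR k g (w' + g t) = tR k g w' * tR k g (g t) :=
      tR_mul k g (Wsum_mem_S g r hw') (mem_S_g g t)
    have h2 : tR k g w' ∈ (mI k g) ^ r :=
      tR_mem_pow_of_setM k g r w' (Wsum_mem_setM g hg r hw')
    have h3 : tR k g (g t) ∈ (mI k g) ^ 1 := by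
      rw [pow_one]; exact Ideal.subset_span ⟨t, rfl⟩
    rw [h1, ← grM_mul k g h2 h3, Submodule.pow_succ]
    exact Ideal.mul_mem_mul (ih hw') (grM_gen_mem_MM k g t)

lemma MMpow_le_span (hg : MinGen g) : ∀ r : ℕ, (MM k g) ^ r ≤ Ideal.span (PSet k g r) := by
  intro r
  induction r with
  | zero =>
    rw [Submodule.pow_zero, Ideal.one_eq_top]
    have h1 : (1 : grG k g) ∈ PSet k g 0 :=
      ⟨0, Set.mem_singleton 0, (grM_zero_one k g).symm⟩
    rw [(Ideal.eq_top_iff_one _).mpr (Ideal.subset_span h1)]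
  | succ r ih =>
    rw [Submodule.pow_succ]
    haveI : (Ideal.span (PSet k g r)).IsTwoSided :=
      ⟨fun b ha => by
        have h := Ideal.mul_mem_left (Ideal.span (PSet k g r)) b ha
        rwa [mul_comm (b : grG k g)] at h⟩
    calc (MM k g) ^ r * MM k g
        ≤ Ideal.span (PSet k g r) * Ideal.span (xiSet k g) :=
          Ideal.mul_mono ih (MM_le_span_xi k g)
      _ = Ideal.span (⋃ s ∈ PSet k g r, ⋃ t ∈ xiSet k g, {s * t}) :=
          (Ideal.span_mul_span _ _).trans (congr_arg Ideal.span (Set.ext fun _ => by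
            simp only [Set.mem_mul, Set.mem_iUnion, Set.mem_singleton_iff, exists_prop]
            constructor <;> rintro ⟨a, ha, b, hb, h⟩ <;> exact ⟨a, ha, b, hb, h.symm⟩))
      _ ≤ Ideal.span (PSet k g (r + 1)) := by
          rw [Ideal.span_le]
          intro x hx
          simp only [Set.mem_iUnion, Set.mem_singleton_iff] at hx
          obtain ⟨s, ⟨w, hw, rfl⟩, u, ⟨t, rfl⟩, rfl⟩ := hx
          have h2 : tR k g w ∈ (mI k g) ^ r :=
            tR_mem_pow_of_setM k g r w (Wsum_mem_setM g hg r hw)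
          have h3 : tR k g (g t) ∈ (mI k g) ^ 1 := by
            rw [pow_one]; exact Ideal.subset_span ⟨t, rfl⟩
          refine Ideal.subset_span ⟨w + g t, ⟨w, hw, t, rfl⟩, ?_⟩
          rw [grM_mul k g h2 h3, tR_mul k g (Wsum_mem_S g r hw) (mem_S_g g t)]

/-! #### Membership criterion for `annM` -/

lemma annM_kills (hg : MinGen g) {x : ℕ} (hx : x ∈ S g)
    (hτ : tstar k g x ∈ annM k g) {w : ℕ} (hw : w ∈ Wsum g (rnum k g)) :
    tR k g (x + w) ∈ (mI k g) ^ (ordS g x + rnum k g + 1) := by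
  have hwS : w ∈ S g := Wsum_mem_S g _ hw
  have hwM : tR k g w ∈ (mI k g) ^ (rnum k g) :=
    tR_mem_pow_of_setM k g _ w (Wsum_mem_setM g hg _ hw)
  have hp : grM k g (rnum k g) (tR k g w) ∈ (MM k g) ^ (rnum k g) :=
    PSet_mem_MMpow k g hg _ hw
  have h0 : tstar k g x * grM k g (rnum k g) (tR k g w) = 0 := by
    have h1 := Submodule.mem_colon.mp hτ _ hp
    rwa [Submodule.mem_bot, smul_eq_mul] at h1
  rw [tstar_eq, grM_mul k g (tR_mem_pow k g x) hwM, ← tR_mul k g hx hwS] at h0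
  exact (grM_eq_zero_iff k g (tR_mem_pow_of_setM k g _ _
    (add_mem_setM g _ (mem_setM_ordS g hx) (Wsum_mem_setM g hg _ hw)))).mp h0

lemma mem_annM_of (hg : MinGen g) {x : ℕ} (hx : x ∈ S g)
    (H : ∀ w ∈ Wsum g (rnum k g), tR k g (x + w) ∈ (mI k g) ^ (ordS g x + rnum k g + 1)) :
    tstar k g x ∈ annM k g := by
  show tstar k g x ∈ Submodule.colon ⊥ (((MM k g) ^ (rnum k g) : Ideal (grG k g)) : Set (grG k g))
  rw [Submodule.mem_colon]
  intro p hp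
  rw [Submodule.mem_bot, smul_eq_mul]
  have hp' : p ∈ Ideal.span (PSet k g (rnum k g)) := MMpow_le_span k g hg _ hp
  clear hp
  induction hp' using Submodule.span_induction with
  | mem q hq =>
    obtain ⟨w, hw, rfl⟩ := hq
    have hwS : w ∈ S g := Wsum_mem_S g _ hw
    have hwM : tR k g w ∈ (mI k g) ^ (rnum k g) :=
      tR_mem_pow_of_setM k g _ w (Wsum_mem_setM g hg _ hw)
    rw [tstar_eq, grM_mul k g (tR_mem_pow k g x) hwM, ← tR_mul k g hx hwS]
    exact (grM_eq_zero_iff k g (tR_mem_pow_of_setM k g _ _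
      (add_mem_setM g _ (mem_setM_ordS g hx) (Wsum_mem_setM g hg _ hw)))).mpr (H w hw)
  | zero => exact mul_zero (tstar k g x)
  | add q1 q2 h1 h2 p1 p2 => rw [mul_add, p1, p2, add_zero]
  | smul a q hq pq =>
    rw [smul_eq_mul, show tstar k g x * (a * q) = a * (tstar k g x * q) from by ring, pq]
    exact mul_zero a

lemma jump (hg : MinGen g) (hB : IsBuchsbaum k g) {x : ℕ} (hx : x ∈ S g)
    (hτ : tstar k g x ∈ annM k g) : ordS g x + 2 ≤ ordS g (x + g 0) := by
  have hB' : ann1 k g = annM k g := hB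
  have h1 : tstar k g x ∈ ann1 k g := by rw [hB']; exact hτ
  have h2 : grM k g 1 (tR k g (g 0)) ∈ MM k g := grM_gen_mem_MM k g 0
  have h3 : tstar k g x * grM k g 1 (tR k g (g 0)) = 0 := by
    have h4 := Submodule.mem_colon.mp h1 _ h2
    rwa [Submodule.mem_bot, smul_eq_mul] at h4
  have h5 : tR k g (g 0) ∈ (mI k g) ^ 1 := by
    rw [pow_one]; exact Ideal.subset_span ⟨(0 : Fin (n+1)), rfl⟩
  rw [tstar_eq, grM_mul k g (tR_mem_pow k g x) h5,
    ← tR_mul k g hx (mem_S_g g 0)] at h3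
  have h6 : tR k g (x + g 0) ∈ (mI k g) ^ (ordS g x + 1 + 1) :=
    (grM_eq_zero_iff k g (tR_mem_pow_of_setM k g _ _ (by
      rw [add_comm x (g 0)]
      exact mem_setM_succ g (mem_S_g g 0) (g_ne_zero g hg 0) (mem_setM_ordS g hx)))).mp h3
  apply ordS_ge
  exact (tR_mem_pow_iff k g hg (add_mem hx (mem_S_g g 0))).mp h6
/-! #### Apery sets, the blow-up, and the invariants -/

lemma finset_gcd_bezout (f : Fin (n+1) → ℕ) (s : Finset (Fin (n+1))) :
    ∃ c : Fin (n+1) → ℤ, ((s.gcd f : ℕ) : ℤ) = ∑ t ∈ s, c t * f t := by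
  classical
  induction s using Finset.induction_on with
  | empty => exact ⟨fun _ => 0, by simp⟩
  | @insert a s ha ih =>
    obtain ⟨c, hc⟩ := ih
    refine ⟨fun t => if t = a then Nat.gcdA (f a) (s.gcd f)
      else c t * Nat.gcdB (f a) (s.gcd f), ?_⟩
    rw [Finset.gcd_insert, Finset.sum_insert ha]
    beta_reduce
    rw [if_pos rfl]
    have hsum : ∑ t ∈ s, (if t = a then Nat.gcdA (f a) (s.gcd f)
        else c t * Nat.gcdB (f a) (s.gcd f)) * (f t : ℤ)
        = (∑ t ∈ s, c t * (f t : ℤ)) * Nat.gcdB (f a) (s.gcd f) := by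
      rw [Finset.sum_mul]
      refine Finset.sum_congr rfl fun t ht => ?_
      rw [if_neg (by rintro rfl; exact ha ht)]
      ring
    rw [hsum, ← hc]
    rw [show (GCDMonoid.gcd (f a) (s.gcd f) : ℕ) = Nat.gcd (f a) (s.gcd f) from rfl]
    rw [Nat.gcd_eq_gcd_ab]
    push_cast
    ring

lemma exists_mem_S_mod (hg : MinGen g) {i : ℕ} (hi : i < g 0) :
    ∃ s, s ∈ S g ∧ s % g 0 = i := by
  obtain ⟨c, hc⟩ := finset_gcd_bezout g Finset.univ
  rw [hg.gcdeq, Nat.cast_one] at hc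
  set C : ℕ := ∑ t, (c t).natAbs with hC
  have hg0 : 1 ≤ g 0 := g0_pos g hg
  have hnonneg : ∀ t, 0 ≤ c t + (C : ℤ) * g 0 := by
    intro t
    have h1 : (c t).natAbs ≤ C := Finset.single_le_sum
      (f := fun t => (c t).natAbs) (fun _ _ => Nat.zero_le _) (Finset.mem_univ t)
    have h2 : -((c t).natAbs : ℤ) ≤ c t := by
      rw [← Int.abs_eq_natAbs]
      exact neg_abs_le _
    have h3 : (C : ℤ) * 1 ≤ (C : ℤ) * g 0 := by
      apply mul_le_mul_of_nonneg_left _ (by positivity)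
      exact_mod_cast hg0
    have h4 : ((c t).natAbs : ℤ) ≤ (C : ℤ) := by exact_mod_cast h1
    linarith
  set s1 : ℕ := ∑ t, (c t + (C : ℤ) * g 0).toNat * g t with hs1
  have hs1S : s1 ∈ S g := by
    refine sum_mem fun t _ => ?_
    have h5 := AddSubmonoid.nsmul_mem (S g) (mem_S_g g t) ((c t + (C : ℤ) * g 0).toNat)
    rwa [nsmul_eq_mul] at h5
  have hcast : (s1 : ℤ) = 1 + (g 0 : ℤ) * ((C : ℤ) * ∑ t, (g t : ℤ)) := by
    have h5 : (s1 : ℤ) = ∑ t, (c t + (C : ℤ) * g 0) * g t := by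
      rw [hs1]
      push_cast
      refine Finset.sum_congr rfl fun t _ => ?_
      rw [Int.toNat_of_nonneg (hnonneg t)]
    rw [h5]
    have h6 : ∑ t, (c t + (C : ℤ) * (g 0 : ℤ)) * (g t : ℤ)
        = (∑ t, c t * (g t : ℤ)) + ((C : ℤ) * g 0) * ∑ t, (g t : ℤ) := by
      rw [Finset.mul_sum, ← Finset.sum_add_distrib]
      exact Finset.sum_congr rfl fun t _ => by ring
    rw [h6, ← hc]
    ring
  have hE : s1 = 1 + g 0 * (C * ∑ t, g t) := by
    have h7 : ((1 + g 0 * (C * ∑ t, g t) : ℕ) : ℤ)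
        = 1 + (g 0 : ℤ) * ((C : ℤ) * ∑ t, (g t : ℤ)) := by push_cast; ring
    exact_mod_cast hcast.trans h7.symm
  refine ⟨i * s1, ?_, ?_⟩
  · have h8 := AddSubmonoid.nsmul_mem (S g) hs1S i
    rwa [nsmul_eq_mul] at h8
  · rw [hE, show i * (1 + g 0 * (C * ∑ t, g t)) = i + (i * (C * ∑ t, g t)) * g 0 by ring,
      Nat.add_mul_mod_self_right, Nat.mod_eq_of_lt hi]

lemma ap_spec (hg : MinGen g) {i : ℕ} (hi : i < g 0) :
    ap g i ∈ S g ∧ ap g i % g 0 = i := by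
  obtain ⟨s, hs1, hs2⟩ := exists_mem_S_mod g hg hi
  have h1 := Nat.sInf_mem (s := {s | s ∈ S g ∧ s % g 0 = i}) ⟨s, hs1, hs2⟩
  exact h1

lemma S_le_S' (hg : MinGen g) : S g ≤ S' g := by
  rw [S]
  refine AddSubmonoid.closure_le.mpr ?_
  rintro y ⟨t, rfl⟩
  have h1 : g 0 ∈ S' g := AddSubmonoid.subset_closure (Set.mem_insert _ _)
  have h2 : g t - g 0 ∈ S' g :=
    AddSubmonoid.subset_closure (Set.mem_insert_of_mem _ ⟨t, rfl⟩)
  have h3 := add_mem h2 h1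
  rwa [Nat.sub_add_cancel (g0_le g hg t)] at h3

lemma ap'_spec (hg : MinGen g) {i : ℕ} (hi : i < g 0) :
    ap' g i ∈ S' g ∧ ap' g i % g 0 = i := by
  obtain ⟨h1, h2⟩ := ap_spec g hg hi
  have h3 := Nat.sInf_mem (s := {s | s ∈ S' g ∧ s % g 0 = i}) ⟨ap g i, S_le_S' g hg h1, h2⟩
  exact h3

lemma ap'_le_ap (hg : MinGen g) {i : ℕ} (hi : i < g 0) : ap' g i ≤ ap g i := by
  obtain ⟨h1, h2⟩ := ap_spec g hg hi
  exact Nat.sInf_le ⟨S_le_S' g hg h1, h2⟩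

lemma ap_eq_ap'_add (hg : MinGen g) {i : ℕ} (hi : i < g 0) :
    ap g i = ap' g i + aa g i * g 0 := by
  obtain ⟨_, h2⟩ := ap_spec g hg hi
  obtain ⟨_, h4⟩ := ap'_spec g hg hi
  have hle := ap'_le_ap g hg hi
  have hg0 := g0_pos g hg
  have e1 : g 0 * (ap g i / g 0) + i = ap g i := by
    conv_rhs => rw [← Nat.div_add_mod (ap g i) (g 0)]
    rw [h2]
  have e2 : g 0 * (ap' g i / g 0) + i = ap' g i := by
    conv_rhs => rw [← Nat.div_add_mod (ap' g i) (g 0)]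
    rw [h4]
  set q1 := ap g i / g 0 with hq1
  set q2 := ap' g i / g 0 with hq2
  have hq : q2 ≤ q1 := by
    by_contra hcon
    push_neg at hcon
    have h5 : g 0 * q1 < g 0 * q2 := (Nat.mul_lt_mul_left hg0).mpr hcon
    omega
  have h6 : g 0 * q2 ≤ g 0 * q1 := Nat.mul_le_mul_left _ hq
  have hsub : ap g i - ap' g i = g 0 * (q1 - q2) := by
    have h5 : g 0 * (q1 - q2) = g 0 * q1 - g 0 * q2 := Nat.mul_sub _ _ _
    omega
  have haa : aa g i = q1 - q2 := by
    rw [aa, hsub, Nat.mul_div_cancel_left _ hg0]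
  rw [haa]
  have h7 : (q1 - q2) * g 0 = g 0 * q1 - g 0 * q2 := by
    rw [mul_comm, Nat.mul_sub]
  omega

lemma mem_S'_of_mem_M (hg : MinGen g) {u : ℕ} (hu : u ∈ S g) :
    u ≠ 0 → ∃ y ∈ S' g, u = y + g 0 := by
  induction hu using AddSubmonoid.closure_induction with
  | mem x hx =>
    intro _
    obtain ⟨t, rfl⟩ := hx
    exact ⟨g t - g 0, AddSubmonoid.subset_closure (Set.mem_insert_of_mem _ ⟨t, rfl⟩),
      (Nat.sub_add_cancel (g0_le g hg t)).symm⟩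
  | zero => intro h; exact absurd rfl h
  | add x y hx hy px py =>
    intro h
    by_cases hx0 : x = 0
    · rw [hx0, zero_add] at h ⊢; exact py h
    · obtain ⟨y', hy', hyeq⟩ := px hx0
      exact ⟨y' + y, add_mem hy' (S_le_S' g hg hy), by omega⟩

lemma blowup_sub (hg : MinGen g) : ∀ (h : ℕ) {z : ℕ}, z ∈ setM g h →
    ∃ y ∈ S' g, z = y + h * g 0 := by
  intro h
  induction h with
  | zero => intro z hz; exact ⟨z, S_le_S' g hg hz, by omega⟩
  | succ h ih =>
    rintro z ⟨u, hu, v, hv, huv⟩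
    have huv' : u + v = z := huv
    obtain ⟨y, hy, hyeq⟩ := ih hv
    obtain ⟨y', hy', hyeq'⟩ := mem_S'_of_mem_M g hg hu.1 hu.2
    refine ⟨y' + y, add_mem hy' hy, ?_⟩
    have h8 : (h + 1) * g 0 = h * g 0 + g 0 := by ring
    omega

lemma ord_le_aa_add (hg : MinGen g) {i : ℕ} (hi : i < g 0) (l : ℕ) :
    ordS g (ap g i + l * g 0) ≤ aa g i + l := by
  have hg0 := g0_pos g hg
  obtain ⟨hapS, hapmod⟩ := ap_spec g hg hi
  have hxS : ap g i + l * g 0 ∈ S g := add_mem hapS (mul_g0_mem g l)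
  have hx : ap g i + l * g 0 ∈ setM g (ordS g (ap g i + l * g 0)) := mem_setM_ordS g hxS
  set h := ordS g (ap g i + l * g 0) with hh
  obtain ⟨y, hy, hxy⟩ := blowup_sub g hg h hx
  have hymod : y % g 0 = i := by
    have h1 : (ap g i + l * g 0) % g 0 = i := by
      rw [Nat.add_mul_mod_self_right, hapmod]
    rw [hxy, Nat.add_mul_mod_self_right] at h1
    exact h1
  have h1 : ap' g i ≤ y := Nat.sInf_le ⟨hy, hymod⟩
  have h2 := ap_eq_ap'_add g hg hi
  have h4 : aa g i * g 0 + l * g 0 = (aa g i + l) * g 0 := by ring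
  have h3 : h * g 0 ≤ (aa g i + l) * g 0 := by omega
  exact Nat.le_of_mul_le_mul_right h3 hg0

/-- Proposition 3a. Assume `G(m)` is Buchsbaum and let `i` be
an index with `a_i > b_i`. Then `l_i < a_i − b_i`. -/
theorem statement4 {k : Type*} [Field k] [Infinite k] {n : ℕ} (g : Fin (n + 1) → ℕ)
    (hg : MinGen g) (hB : IsBuchsbaum k g)
    (i : ℕ) (hi : i < g 0) (hab : bb g i < aa g i) :
    lℓ k g i < aa g i - bb g i := by
  have hg0 := g0_pos g hg
  obtain ⟨hapS, hapmod⟩ := ap_spec g hg hi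
  have hxS : ∀ l : ℕ, ap g i + l * g 0 ∈ S g := fun l => add_mem hapS (mul_g0_mem g l)
  have main : ∀ l : ℕ, tstar k g (ap g i + l * g 0) ∈ annM k g → l < aa g i - bb g i := by
    intro l hl
    by_contra hcon
    push_neg at hcon
    -- downward closedness of torsion along multiplication by t^{g 0}
    have DC : ∀ m : ℕ, tstar k g (ap g i + (m + 1) * g 0) ∈ annM k g →
        tstar k g (ap g i + m * g 0) ∈ annM k g := by
      intro m hm
      apply mem_annM_of k g hg (hxS m)
      intro w hw
      have hwS : w ∈ S g := Wsum_mem_S g _ hw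
      have hkill := annM_kills k g hg (hxS (m + 1)) hm hw
      have hstep : ordS g (ap g i + m * g 0) + 1 ≤ ordS g (ap g i + (m + 1) * g 0) := by
        have h1 := ordS_add_g0 g hg (hxS m)
        rwa [show ap g i + m * g 0 + g 0 = ap g i + (m + 1) * g 0 by ring] at h1
      rw [show ap g i + (m + 1) * g 0 + w = (ap g i + m * g 0 + w) + g 0 by ring] at hkill
      have h2 : tR k g ((ap g i + m * g 0 + w) + g 0) ∈
          (mI k g) ^ (ordS g (ap g i + m * g 0) + rnum k g + 1 + 1) :=
        Ideal.pow_le_pow_right (by omega) hkill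
      have h3 : ap g i + m * g 0 + w ∈ setM g (ordS g (ap g i + m * g 0) + rnum k g + 1) :=
        descent k g hg (add_mem (hxS m) hwS) (by omega) h2
      exact tR_mem_pow_of_setM k g _ _ h3
    -- all smaller torsion candidates are torsion
    have below : ∀ d m : ℕ, m + d = l → tstar k g (ap g i + m * g 0) ∈ annM k g := by
      intro d
      induction d with
      | zero => intro m hm; rw [show m = l by omega]; exact hl
      | succ d ih => intro m hm; exact DC m (ih (m + 1) (by omega))
    -- each torsion level forces a jump of the order function
    have grow : ∀ m : ℕ, m ≤ l + 1 → bb g i + 2 * m ≤ ordS g (ap g i + m * g 0) := by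
      intro m
      induction m with
      | zero =>
        intro _
        rw [show ap g i + 0 * g 0 = ap g i by ring]
        have hbb : bb g i = ordS g (ap g i) := rfl
        omega
      | succ m ih =>
        intro hm
        have h1 := ih (by omega)
        have hj := jump k g hg hB (hxS m) (below (l - m) m (by omega))
        rw [show ap g i + m * g 0 + g 0 = ap g i + (m + 1) * g 0 by ring] at hj
        omega
    have hup := ord_le_aa_add g hg hi (l + 1)
    have hlow := grow (l + 1) le_rfl
    omega
  have hbdd : BddAbove {l | tstar k g (ap g i + l * g 0) ∈ annM k g} :=
    ⟨aa g i - bb g i, fun x hx => le_of_lt (main x hx)⟩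
  rcases Set.eq_empty_or_nonempty {l | tstar k g (ap g i + l * g 0) ∈ annM k g} with hL | hL
  · have h0 : lℓ k g i = 0 := by
      unfold lℓ
      rw [hL]
      simpa using csSup_empty
    omega
  · have hmem := Nat.sSup_mem hL hbdd
    exact main _ hmem


end NumSgrp
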